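/- Let A : V → V be an invertible linear map on a 2-dimensional real inner product space with |det A| = 1, and suppose the cone C = {αX + βY : αβ ≥ 0} (X, Y linearly independent) satisfies A(C \ {0}) ⊂ Int(C). Then there exists a unit vector ξ ∈ C with Aξ ∈ span(ξ) scaled by a factor of absolute value ≥ 1; i.e., A has a real eigenvector in C with eigenvalue of absolute value at least 1. -/

import Mathlib

open Topology

/-- The cone determined by `X` and `Y`: `{αX + βY : αβ ≥ 0}`. -/
def cone {V : Type*} [AddCommGroup V] [Module ℝ V] (X Y : V) : Set V :=
  {v | ∃ α β : ℝ, 0 ≤ α * β ∧ v = α • X + β • Y}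

section aux
set_option linter.unusedSectionVars false
variable {V : Type*} [NormedAddCommGroup V] [InnerProductSpace ℝ V] [FiniteDimensional ℝ V]

lemma mem_cone_coords (B : Module.Basis (Fin 2) ℝ V) {v : V} (hv : v ∈ cone (B 0) (B 1)) :
    0 ≤ B.repr v 0 * B.repr v 1 := by
  obtain ⟨α, β, hαβ, rfl⟩ := hv
  simpa [Finsupp.single_apply] using hαβ

lemma not_mem_interior_aux (B : Module.Basis (Fin 2) ℝ V) {w : V}
    (hw : w ≠ 0) (h : B.repr w 0 * B.repr w 1 = 0) :
    w ∉ interior (cone (B 0) (B 1)) := by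
  intro hint
  have hwr : B.repr w ≠ 0 := fun h' => hw (by simpa using B.repr.injective (by simpa using h'))
  rcases mul_eq_zero.1 h with h0 | h0
  · have h1ne : B.repr w 1 ≠ 0 := by
      intro h1
      exact hwr (Finsupp.ext fun i => by fin_cases i <;> simp [h0, h1])
    have hcont : Continuous (fun t : ℝ => w + t • B 0) := by continuity
    have hev : ∀ᶠ t in 𝓝 (0:ℝ), w + t • B 0 ∈ interior (cone (B 0) (B 1)) :=
      (hcont.continuousAt (x := (0:ℝ))).eventually_mem
        (isOpen_interior.mem_nhds (by simpa using hint))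
    rcases Metric.eventually_nhds_iff.1 hev with ⟨ε, hε, hball⟩
    set t : ℝ := if 0 < B.repr w 1 then -(ε/2) else ε/2 with ht
    have htd : dist t 0 < ε := by
      rw [Real.dist_eq, sub_zero, ht]
      split_ifs
      · rw [abs_of_neg (by linarith)]; linarith
      · rw [abs_of_pos (by linarith)]; linarith
    have hmem' := mem_cone_coords B (interior_subset (hball htd))
    simp [Finsupp.single_apply, h0] at hmem'
    rw [ht] at hmem'
    split_ifs at hmem' with hp
    · nlinarith
    · have : B.repr w 1 < 0 := lt_of_le_of_ne (not_lt.1 hp) h1ne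
      nlinarith
  · have h1ne : B.repr w 0 ≠ 0 := by
      intro h1
      exact hwr (Finsupp.ext fun i => by fin_cases i <;> simp [h0, h1])
    have hcont : Continuous (fun t : ℝ => w + t • B 1) := by continuity
    have hev : ∀ᶠ t in 𝓝 (0:ℝ), w + t • B 1 ∈ interior (cone (B 0) (B 1)) :=
      (hcont.continuousAt (x := (0:ℝ))).eventually_mem
        (isOpen_interior.mem_nhds (by simpa using hint))
    rcases Metric.eventually_nhds_iff.1 hev with ⟨ε, hε, hball⟩
    set t : ℝ := if 0 < B.repr w 0 then -(ε/2) else ε/2 with ht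
    have htd : dist t 0 < ε := by
      rw [Real.dist_eq, sub_zero, ht]
      split_ifs
      · rw [abs_of_neg (by linarith)]; linarith
      · rw [abs_of_pos (by linarith)]; linarith
    have hmem' := mem_cone_coords B (interior_subset (hball htd))
    simp [Finsupp.single_apply, h0] at hmem'
    rw [ht] at hmem'
    split_ifs at hmem' with hp
    · nlinarith
    · have : B.repr w 0 < 0 := lt_of_le_of_ne (not_lt.1 hp) h1ne
      nlinarith


end aux

lemma key_algebra (a b c d : ℝ) (hac : 0 < a*c) (hbd : 0 < b*d) (hab : 0 < a*b)
    (hdet : |a*d - b*c| = 1) :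
    ∃ l : ℝ, 1 ≤ |l| ∧ l*l = (a+d)*l - (a*d - b*c) ∧ 0 ≤ b*(l-a) := by
  have hbc : 0 < b*c := by nlinarith [mul_pos hab hac, sq_nonneg a]
  have hD : (0:ℝ) ≤ (a-d)^2 + 4*(b*c) := by nlinarith
  set r := Real.sqrt ((a-d)^2 + 4*(b*c)) with hr
  have hr0 : 0 ≤ r := Real.sqrt_nonneg _
  have hr2 : r^2 = (a-d)^2 + 4*(b*c) := Real.sq_sqrt hD
  have habs : |a - d| ≤ r := by
    rw [← Real.sqrt_sq_eq_abs]
    exact Real.sqrt_le_sqrt (by nlinarith)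
  rcases lt_or_ge 0 a with ha | ha
  · have hc : 0 < c := by nlinarith
    have hb : 0 < b := by nlinarith
    have hd : 0 < d := by nlinarith
    refine ⟨(a+d+r)/2, ?_, by linear_combination hr2/4, ?_⟩
    · have hl : 0 < (a+d+r)/2 := by linarith
      have hchar : ((a+d+r)/2) * ((a+d) - (a+d+r)/2) = a*d - b*c := by
        linear_combination -hr2/4
      have h2 : |(a+d) - (a+d+r)/2| ≤ |(a+d+r)/2| := by
        rw [abs_of_pos hl, abs_le]; constructor <;> linarith
      have h3 : |(a+d+r)/2| * |(a+d) - (a+d+r)/2| = 1 := by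
        rw [← abs_mul, hchar, hdet]
      nlinarith [abs_nonneg ((a+d+r)/2)]
    · have h4 : a - d ≤ |a - d| := le_abs_self _
      have : 0 ≤ (a+d+r)/2 - a := by linarith
      exact mul_nonneg hb.le this
  · have ha' : a < 0 := by
      rcases lt_or_eq_of_le ha with h | h
      · exact h
      · simp [h] at hac
    have hc : c < 0 := by nlinarith
    have hb : b < 0 := by nlinarith
    have hd : d < 0 := by nlinarith
    refine ⟨(a+d-r)/2, ?_, by linear_combination hr2/4, ?_⟩
    · have hl : (a+d-r)/2 < 0 := by linarith
      have hchar : ((a+d-r)/2) * ((a+d) - (a+d-r)/2) = a*d - b*c := by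
        linear_combination -hr2/4
      have h2 : |(a+d) - (a+d-r)/2| ≤ |(a+d-r)/2| := by
        rw [abs_of_neg hl, abs_le]; constructor <;> linarith
      have h3 : |(a+d-r)/2| * |(a+d) - (a+d-r)/2| = 1 := by
        rw [← abs_mul, hchar, hdet]
      nlinarith [abs_nonneg ((a+d-r)/2)]
    · have h4 : d - a ≤ |a - d| := by rw [abs_sub_comm]; exact le_abs_self _
      have h5 : (a+d-r)/2 - a ≤ 0 := by linarith
      nlinarith

/-- If `A` is an invertible linear map of a 2-dimensional real inner product space with
`|det A| = 1` mapping the cone `C = {αX + βY : αβ ≥ 0}` (minus the origin) strictly into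
its interior, then `A` has an eigenvector in `C` (a unit vector) whose eigenvalue has
absolute value at least `1`. -/
theorem strict_cone_invariance_expanding_eigenvector {V : Type*} [NormedAddCommGroup V]
    [InnerProductSpace ℝ V] [FiniteDimensional ℝ V] (hdim : Module.finrank ℝ V = 2)
    (X Y : V) (hind : LinearIndependent ℝ ![X, Y])
    (A : V →ₗ[ℝ] V) (hinv : Function.Bijective A) (hdet : |LinearMap.det A| = 1)
    (hcone : ∀ v ∈ cone X Y, v ≠ 0 → A v ∈ interior (cone X Y)) :
    ∃ ξ ∈ cone X Y, ‖ξ‖ = 1 ∧ ∃ μ : ℝ, 1 ≤ |μ| ∧ A ξ = μ • ξ := by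
  have h2 : Fintype.card (Fin 2) = Module.finrank ℝ V := by simp [hdim]
  set B := basisOfLinearIndependentOfCardEqFinrank hind h2 with hBd
  have hB0 : B 0 = X := by
    rw [hBd, coe_basisOfLinearIndependentOfCardEqFinrank]; simp
  have hB1 : B 1 = Y := by
    rw [hBd, coe_basisOfLinearIndependentOfCardEqFinrank]; simp
  rw [← hB0, ← hB1] at hcone ⊢
  set a := B.repr (A (B 0)) 0 with hadef
  set c := B.repr (A (B 0)) 1 with hcdef
  set b := B.repr (A (B 1)) 0 with hbdef
  set d := B.repr (A (B 1)) 1 with hddef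
  have hrepr : ∀ v : V, v = B.repr v 0 • B 0 + B.repr v 1 • B 1 := fun v => by
    have h := B.sum_repr v
    rw [Fin.sum_univ_two] at h
    exact h.symm
  have hAX : A (B 0) = a • B 0 + c • B 1 := hrepr _
  have hAY : A (B 1) = b • B 0 + d • B 1 := hrepr _
  have hdet2 : LinearMap.det A = a * d - b * c := by
    rw [← LinearMap.det_toMatrix B A, Matrix.det_fin_two]
    simp [LinearMap.toMatrix_apply, hadef, hbdef, hcdef, hddef]
  have hAne : ∀ v : V, v ≠ 0 → A v ≠ 0 := fun v hv h =>
    hv (hinv.injective (h.trans (map_zero A).symm))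
  have hXcone : B 0 ∈ cone (B 0) (B 1) := ⟨1, 0, by norm_num, by simp⟩
  have hYcone : B 1 ∈ cone (B 0) (B 1) := ⟨0, 1, by norm_num, by simp⟩
  have hintX := hcone (B 0) hXcone (B.ne_zero 0)
  have hintY := hcone (B 1) hYcone (B.ne_zero 1)
  have hac : 0 < a * c := by
    rcases (mem_cone_coords B (interior_subset hintX)).lt_or_eq with h | h
    · exact h
    · exact absurd hintX (not_mem_interior_aux B (hAne _ (B.ne_zero 0)) h.symm)
  have hbd : 0 < b * d := by
    rcases (mem_cone_coords B (interior_subset hintY)).lt_or_eq with h | h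
    · exact h
    · exact absurd hintY (not_mem_interior_aux B (hAne _ (B.ne_zero 1)) h.symm)
  have ha0 : a ≠ 0 := fun h => by simp [h] at hac
  have hb0 : b ≠ 0 := fun h => by simp [h] at hbd
  have hab : 0 < a * b := by
    by_contra hab
    have hab' : a * b < 0 := lt_of_le_of_ne (not_lt.1 hab) (mul_ne_zero ha0 hb0)
    have hv0c : (-b) • B 0 + a • B 1 ∈ cone (B 0) (B 1) := ⟨-b, a, by nlinarith, rfl⟩
    have hv0ne : (-b) • B 0 + a • B 1 ≠ 0 := by
      intro h
      apply ha0
      have := congrArg (fun u => B.repr u 1) h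
      simpa [Finsupp.single_apply] using this
    have hint := hcone _ hv0c hv0ne
    have hAv0 : A ((-b) • B 0 + a • B 1) = (0:ℝ) • B 0 + (a*d - b*c) • B 1 := by
      rw [map_add, map_smul, map_smul, hAX, hAY]; module
    refine not_mem_interior_aux B (hAne _ hv0ne) ?_ hint
    rw [hAv0]
    simp [Finsupp.single_apply]
  have hdetabs : |a * d - b * c| = 1 := by rw [← hdet2]; exact hdet
  obtain ⟨l, hl1, hchar, hbl⟩ := key_algebra a b c d hac hbd hab hdetabs
  have hvne : b • B 0 + (l - a) • B 1 ≠ 0 := by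
    intro h
    apply hb0
    have := congrArg (fun u => B.repr u 0) h
    simpa [Finsupp.single_apply] using this
  have hAv : A (b • B 0 + (l - a) • B 1) = l • (b • B 0 + (l - a) • B 1) := by
    calc A (b • B 0 + (l - a) • B 1)
        = (b*a + (l-a)*b) • B 0 + (b*c + (l-a)*d) • B 1 := by
          rw [map_add, map_smul, map_smul, hAX, hAY]; module
      _ = (l*b) • B 0 + (l*(l-a)) • B 1 := by
          rw [show b*a + (l-a)*b = l*b by ring,
            show b*c + (l-a)*d = l*(l-a) by linear_combination -hchar]
      _ = l • (b • B 0 + (l - a) • B 1) := by module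
  set v := b • B 0 + (l - a) • B 1 with hv
  have hn : ‖v‖ ≠ 0 := norm_ne_zero_iff.2 hvne
  refine ⟨‖v‖⁻¹ • v, ⟨‖v‖⁻¹ * b, ‖v‖⁻¹ * (l - a), ?_, by rw [hv]; module⟩, ?_, l, hl1, ?_⟩
  · have heq : (‖v‖⁻¹*b) * (‖v‖⁻¹*(l-a)) = (‖v‖⁻¹*‖v‖⁻¹) * (b*(l-a)) := by ring
    rw [heq]
    exact mul_nonneg (mul_nonneg (inv_nonneg.2 (norm_nonneg v)) (inv_nonneg.2 (norm_nonneg v))) hbl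
  · rw [norm_smul, norm_inv, norm_norm, inv_mul_cancel₀ hn]
  · rw [map_smul, hAv, smul_comm]
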